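/- Let u ∈ L¹(𝔻) satisfy the Bekollé–Bonami condition B₂, and for each a ∈ 𝔻 let K_u(·,a) ∈ A²(u) denote the reproducing kernel of A²(u) at a (i.e. ⟨f, K_u(·,a)⟩_{A²(u)} = f(a) for all f ∈ A²(u)). Then the normalized reproducing kernels K_u(·,a)/‖K_u(·,a)‖_{A²(u)} converge to zero weakly in A²(u) as |a| → 1⁻; that is, ⟨f, K_u(·,a)/‖K_u(·,a)‖_{A²(u)}⟩_{A²(u)} → 0 for every f ∈ A²(u). -/

import Mathlib

open MeasureTheory Complex Set Filter
open scoped ENNReal ComplexConjugate NNReal Topology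

noncomputable section

/-- The open unit disc in `ℂ`. -/
def unitDisc : Set ℂ := Metric.ball 0 1

/-- The normalized area (Lebesgue) measure on `ℂ`; the unit disc has mass `1`. -/
def dA : Measure ℂ := (ENNReal.ofReal Real.pi)⁻¹ • volume

/-- The pseudohyperbolic disc `D_r(a) = {z ∈ 𝔻 : |z - a| / |1 - conj a * z| < r}`. -/
def pDisc (r : ℝ) (a : ℂ) : Set ℂ :=
  {z ∈ unitDisc | ‖z - a‖ / ‖1 - conj a * z‖ < r}

/-- The Carleson square over the boundary arc centered at angle `θ` of length `ℓ`. -/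
def carlesonSq (θ ℓ : ℝ) : Set ℂ :=
  {z : ℂ | ∃ ρ t : ℝ, 1 - ℓ / (2 * Real.pi) ≤ ρ ∧ ρ < 1 ∧
    t ∈ Set.Icc (θ - ℓ / 2) (θ + ℓ / 2) ∧ z = (ρ : ℂ) * Complex.exp (t * Complex.I)}

/-- The Bekollé–Bonami condition `B₂`. -/
def BekolleBonami2 (u : ℂ → ℝ) : Prop :=
  ∃ C : ℝ, 0 < C ∧ ∀ θ ℓ : ℝ, 0 < ℓ → ℓ ≤ 2 * Real.pi →
    ((dA (carlesonSq θ ℓ)) ^ 2)⁻¹ *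
        (∫⁻ z in carlesonSq θ ℓ, ENNReal.ofReal (u z) ∂dA) *
        (∫⁻ z in carlesonSq θ ℓ, ENNReal.ofReal (u z)⁻¹ ∂dA) ≤ ENNReal.ofReal C

/-- The squared norm `‖f‖²_{A²(u)} = ∫_𝔻 |f|² u dA` (as an extended real). -/
def bnorm2 (u : ℂ → ℝ) (f : ℂ → ℂ) : ℝ≥0∞ :=
  ∫⁻ z in unitDisc, (‖f z‖₊ : ℝ≥0∞) ^ 2 * ENNReal.ofReal (u z) ∂dA

/-- Membership in the weighted Bergman space `A²(u)`. -/
def IsA2 (u : ℂ → ℝ) (f : ℂ → ℂ) : Prop :=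
  DifferentiableOn ℂ f unitDisc ∧ bnorm2 u f < ⊤

/-- The norm in `A²(u)`. -/
def Anorm (u : ℂ → ℝ) (f : ℂ → ℂ) : ℝ := Real.sqrt (bnorm2 u f).toReal

/-- The measure `μ = u dA`. -/
def wMeasure (u : ℂ → ℝ) : Measure ℂ :=
  dA.withDensity fun z => ENNReal.ofReal (u z)

/-- The Bergman kernel `B_a(z) = (1 - conj a * z)⁻²`. -/
def bergB (a : ℂ) : ℂ → ℂ := fun z => ((1 - conj a * z) ^ 2)⁻¹

/-- The normalized Bergman kernel `b_a(z) = (1 - |a|²)(1 - conj a * z)⁻²`. -/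
def bergb (a : ℂ) : ℂ → ℂ := fun z =>
  ((1 - ‖a‖ ^ 2 : ℝ) : ℂ) * ((1 - conj a * z) ^ 2)⁻¹

/-- The Berezin transform of `ν` relative to the weight `u`:
`ν̃(a) = ‖B_a‖⁻²_{A²(u)} ∫_𝔻 |B_a|² dν`. -/
def berezin (u : ℂ → ℝ) (ν : Measure ℂ) (a : ℂ) : ℝ≥0∞ :=
  (∫⁻ z in unitDisc, (‖bergB a z‖₊ : ℝ≥0∞) ^ 2 ∂ν) / bnorm2 u (bergB a)

/-- The Toeplitz operator with kernel `K` and symbol measure `ν`: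
`T_ν g (z) = ∫_𝔻 K(z,w) g(w) dν(w)`. -/
def toeplitz (K : ℂ → ℂ → ℂ) (ν : Measure ℂ) (g : ℂ → ℂ) : ℂ → ℂ := fun z =>
  ∫ w in unitDisc, K z w * g w ∂ν

/-- Compactness of the inclusion operator `A²(u) → L²(ν)` (sequential form: every sequence in
the unit ball of `A²(u)` has a subsequence that is Cauchy in `L²(ν)`). -/
def InclCompact (u : ℂ → ℝ) (ν : Measure ℂ) : Prop :=
  ∀ f : ℕ → ℂ → ℂ, (∀ n, IsA2 u (f n) ∧ bnorm2 u (f n) ≤ 1) →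
    ∃ φ : ℕ → ℕ, StrictMono φ ∧ ∀ ε : ℝ, 0 < ε → ∃ N, ∀ m ≥ N, ∀ n ≥ N,
      (∫⁻ z in unitDisc, (‖f (φ m) z - f (φ n) z‖₊ : ℝ≥0∞) ^ 2 ∂ν) < ENNReal.ofReal ε

/-- Compactness of an operator `T : A²(u) → A²(u)` (sequential form: `T` maps `A²(u)` into
itself and every sequence in the unit ball of `A²(u)` has a subsequence whose image under `T`
is Cauchy in `A²(u)`). -/
def OpCompact (u : ℂ → ℝ) (T : (ℂ → ℂ) → ℂ → ℂ) : Prop :=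
  (∀ g, IsA2 u g → IsA2 u (T g)) ∧
  ∀ f : ℕ → ℂ → ℂ, (∀ n, IsA2 u (f n) ∧ bnorm2 u (f n) ≤ 1) →
    ∃ φ : ℕ → ℕ, StrictMono φ ∧ ∀ ε : ℝ, 0 < ε → ∃ N, ∀ m ≥ N, ∀ n ≥ N,
      bnorm2 u (fun z => T (f (φ m)) z - T (f (φ n)) z) < ENNReal.ofReal ε

lemma unitDisc_measurableSet : MeasurableSet unitDisc := measurableSet_ball

/-- Cauchy–Schwarz for the weighted pairing. -/
lemma cs_bound (u : ℂ → ℝ) (hu_nonneg : ∀ z ∈ unitDisc, 0 ≤ u z)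
    (hu_meas : AEMeasurable u (dA.restrict unitDisc))
    (g k : ℂ → ℂ) (hg : ContinuousOn g unitDisc) (hk : ContinuousOn k unitDisc)
    (hgfin : bnorm2 u g ≠ ⊤) (hkfin : bnorm2 u k ≠ ⊤) :
    ‖∫ z in unitDisc, g z * conj (k z) * (u z : ℂ) ∂dA‖ ≤ Anorm u g * Anorm u k := by
  set μ := dA.restrict unitDisc with hμ
  have hgm : AEMeasurable g μ := hg.aemeasurable unitDisc_measurableSet
  have hkm : AEMeasurable k μ := hk.aemeasurable unitDisc_measurableSet
  set s : ℂ → ℝ≥0∞ := fun z => (ENNReal.ofReal (u z)) ^ (1/2 : ℝ) with hs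
  have hsm : AEMeasurable s μ := hu_meas.ennreal_ofReal.pow_const _
  have hFm : AEMeasurable (fun z => (‖g z‖₊ : ℝ≥0∞) * s z) μ := hgm.nnnorm.coe_nnreal_ennreal.mul hsm
  have hGm : AEMeasurable (fun z => (‖k z‖₊ : ℝ≥0∞) * s z) μ := hkm.nnnorm.coe_nnreal_ennreal.mul hsm
  have hconj : Real.HolderConjugate 2 2 := Real.HolderConjugate.two_two
  have hss : ∀ z, s z * s z = ENNReal.ofReal (u z) := by
    intro z
    rw [hs, ← ENNReal.rpow_add_of_nonneg _ _ (by norm_num) (by norm_num)]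
    norm_num
  have hsq : ∀ (h : ℂ → ℂ) (z : ℂ), ((‖h z‖₊ : ℝ≥0∞) * s z) ^ (2:ℝ)
      = (‖h z‖₊ : ℝ≥0∞) ^ 2 * ENNReal.ofReal (u z) := by
    intro h z
    rw [ENNReal.mul_rpow_of_nonneg _ _ (by norm_num : (0:ℝ) ≤ 2), hs, ← ENNReal.rpow_mul]
    norm_num
  have h3 : (∫⁻ z, ((‖g z‖₊ : ℝ≥0∞) * s z) ^ (2:ℝ) ∂μ) = bnorm2 u g := by
    rw [bnorm2, ← hμ]; exact lintegral_congr (hsq g)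
  have h4 : (∫⁻ z, ((‖k z‖₊ : ℝ≥0∞) * s z) ^ (2:ℝ) ∂μ) = bnorm2 u k := by
    rw [bnorm2, ← hμ]; exact lintegral_congr (hsq k)
  have h2 := ENNReal.lintegral_mul_le_Lp_mul_Lq μ hconj hFm hGm
  rw [h3, h4] at h2
  have h1 : (∫⁻ z, ENNReal.ofReal ‖g z * conj (k z) * (u z : ℂ)‖ ∂μ)
      = ∫⁻ z, ((fun z => (‖g z‖₊ : ℝ≥0∞) * s z) * fun z => (‖k z‖₊ : ℝ≥0∞) * s z) z ∂μ := by
    refine lintegral_congr_ae ?_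
    filter_upwards [ae_restrict_mem unitDisc_measurableSet] with z hz
    have hu0 : 0 ≤ u z := hu_nonneg z hz
    have hnu : ‖(u z : ℂ)‖ = u z := by
      rw [Complex.norm_real, Real.norm_eq_abs, _root_.abs_of_nonneg hu0]
    simp only [Pi.mul_apply]
    rw [norm_mul, norm_mul, RCLike.norm_conj, hnu,
      ENNReal.ofReal_mul (by positivity), ENNReal.ofReal_mul (norm_nonneg _),
      ofReal_norm, ofReal_norm, enorm_eq_nnnorm, enorm_eq_nnnorm,
      mul_mul_mul_comm, hss z]
  have hne : (bnorm2 u g) ^ (1/2 : ℝ) * (bnorm2 u k) ^ (1/2 : ℝ) ≠ ⊤ :=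
    ENNReal.mul_ne_top (ENNReal.rpow_ne_top_of_nonneg (by norm_num) hgfin)
      (ENNReal.rpow_ne_top_of_nonneg (by norm_num) hkfin)
  calc ‖∫ z in unitDisc, g z * conj (k z) * (u z : ℂ) ∂dA‖
      ≤ (∫⁻ z, ENNReal.ofReal ‖g z * conj (k z) * (u z : ℂ)‖ ∂μ).toReal :=
        norm_integral_le_lintegral_norm _
    _ ≤ ((bnorm2 u g) ^ (1/2 : ℝ) * (bnorm2 u k) ^ (1/2 : ℝ)).toReal := by
        refine ENNReal.toReal_mono hne ?_
        rw [h1]; exact h2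
    _ = Anorm u g * Anorm u k := by
        rw [ENNReal.toReal_mul, Anorm, Anorm, Real.sqrt_eq_rpow, Real.sqrt_eq_rpow,
          ENNReal.toReal_rpow, ENNReal.toReal_rpow]

/-- If `u ∈ L¹(𝔻)` satisfies `B₂` and `K_u(·,a)` is the reproducing kernel
of `A²(u)` at `a`, then the normalized reproducing kernels `K_u(·,a)/‖K_u(·,a)‖_{A²(u)}`
converge to zero weakly in `A²(u)` as `|a| → 1⁻`. -/
theorem normalized_kernels_weakly_null
    (u : ℂ → ℝ) (hu_nonneg : ∀ z ∈ unitDisc, 0 ≤ u z)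
    (hu_int : IntegrableOn u unitDisc dA)
    (hB2 : BekolleBonami2 u)
    (K : ℂ → ℂ → ℂ)
    (hK_mem : ∀ a ∈ unitDisc, IsA2 u fun z => K z a)
    (hK_repr : ∀ a ∈ unitDisc, ∀ f, IsA2 u f →
      (∫ z in unitDisc, f z * conj (K z a) * (u z : ℂ) ∂dA) = f a) :
    ∀ f, IsA2 u f → ∀ ε : ℝ, 0 < ε → ∃ δ ∈ Set.Ioo (0 : ℝ) 1, ∀ a ∈ unitDisc,
      δ < ‖a‖ →
        ‖∫ z in unitDisc, f z * conj (K z a) * (u z : ℂ) ∂dA‖ /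
          Anorm u (fun z => K z a) < ε := by
  
  intro f hf ε hε
  by_contra hcon
  push_neg at hcon
  have hu_meas : AEMeasurable u (dA.restrict unitDisc) := hu_int.aemeasurable
  -- extract a sequence of bad points approaching the boundary
  have hseq : ∀ n : ℕ, ∃ b ∈ unitDisc, 1 - 1/((n:ℝ)+2) < ‖b‖ ∧
      ε ≤ ‖∫ z in unitDisc, f z * conj (K z b) * (u z : ℂ) ∂dA‖ /
        Anorm u (fun z => K z b) := by
    intro n
    refine hcon (1 - 1/((n:ℝ)+2)) ⟨?_, ?_⟩
    · have h1 : (1:ℝ)/((n:ℝ)+2) < 1 := by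
        rw [div_lt_one (by positivity)]
        have : (0:ℝ) ≤ (n:ℝ) := Nat.cast_nonneg n
        linarith
      linarith
    · have h1 : (0:ℝ) < 1/((n:ℝ)+2) := by positivity
      linarith
  choose a ha hδ hεle using hseq
  -- extract a convergent subsequence with limit on the boundary
  obtain ⟨ζ, hζmem, ψ, hψmono, hψtend⟩ :=
    (isCompact_closedBall (0:ℂ) 1).tendsto_subseq
      (fun n => Metric.ball_subset_closedBall (ha n))
  have habs : Tendsto (fun n => ‖a (ψ n)‖) atTop (𝓝 ‖ζ‖) :=
    (continuous_norm.tendsto ζ).comp hψtend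
  have hζ1 : ‖ζ‖ = 1 := by
    have hle : ‖ζ‖ ≤ 1 := by
      have := hζmem
      rw [Metric.mem_closedBall, dist_zero_right] at this
      simpa using this
    refine le_antisymm hle (le_of_not_gt fun hlt => ?_)
    obtain ⟨N, hN⟩ := exists_nat_one_div_lt (sub_pos.2 hlt)
    have hgen : 1 - 1/((N:ℝ)+1) ≤ ‖ζ‖ := by
      refine ge_of_tendsto habs (eventually_atTop.2 ⟨N, fun n hn => ?_⟩)
      have hψn : (N:ℝ) ≤ (ψ n : ℝ) := by
        exact_mod_cast le_trans hn hψmono.le_apply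
      have h1 : (1:ℝ)/((ψ n : ℝ)+2) ≤ 1/((N:ℝ)+1) := by
        apply one_div_le_one_div_of_le (by positivity)
        linarith
      have h2 := hδ (ψ n)
      linarith
    linarith
  -- the auxiliary analytic function φ
  set φfun : ℂ → ℂ := fun z => (1 + conj ζ * z)/2 with hφdef
  have hφcont : Continuous φfun :=
    (continuous_const.add (continuous_const.mul continuous_id)).div_const 2
  have hφdiff : Differentiable ℂ φfun :=
    ((differentiable_const _).add ((differentiable_const _).mul differentiable_id)).div_const 2
  have hζnorm : ‖ζ‖ = 1 := by rw [hζ1]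
  have h2c : ‖(2:ℂ)‖ = 2 := by norm_num
  have hφlt : ∀ z ∈ unitDisc, ‖φfun z‖ < 1 := by
    intro z hz
    have hz1 : ‖z‖ < 1 := mem_ball_zero_iff.1 hz
    have hnum : ‖1 + conj ζ * z‖ < 2 := by
      refine lt_of_le_of_lt (norm_add_le _ _) ?_
      rw [norm_one, norm_mul, RCLike.norm_conj, hζnorm, one_mul]
      linarith
    have : ‖φfun z‖ = ‖1 + conj ζ * z‖ / 2 := by
      rw [hφdef, norm_div, h2c]
    rw [this]
    linarith
  have hφζ : φfun ζ = 1 := by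
    have hcm : conj ζ * ζ = 1 := by
      rw [mul_comm, Complex.mul_conj]
      have : Complex.normSq ζ = 1 := by
        rw [Complex.normSq_eq_norm_sq, hζ1, one_pow]
      rw [this, Complex.ofReal_one]
    rw [hφdef]
    simp only [hcm]
    norm_num
  -- the functions g m = f * φ^m belong to A²(u)
  have hb_le : ∀ m : ℕ, bnorm2 u (fun z => f z * φfun z ^ m) ≤ bnorm2 u f := by
    intro m
    rw [bnorm2, bnorm2]
    refine lintegral_mono_ae ?_
    filter_upwards [ae_restrict_mem unitDisc_measurableSet] with z hz
    have hφ1 : ‖φfun z‖₊ ≤ 1 := by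
      rw [← NNReal.coe_le_coe, coe_nnnorm, NNReal.coe_one]
      exact (hφlt z hz).le
    gcongr
    rw [nnnorm_mul]
    refine mul_le_of_le_one_right zero_le ?_
    rw [nnnorm_pow]
    exact pow_le_one₀ zero_le hφ1
  have hgIsA2 : ∀ m : ℕ, IsA2 u (fun z => f z * φfun z ^ m) := by
    intro m
    constructor
    · exact hf.1.mul (hφdiff.pow m).differentiableOn
    · exact lt_of_le_of_lt (hb_le m) hf.2
  -- bnorm2 of g m tends to 0 by dominated convergence
  have hfc : ContinuousOn f unitDisc := hf.1.continuousOn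
  have htend : Tendsto (fun m => bnorm2 u (fun z => f z * φfun z ^ m)) atTop (𝓝 0) := by
    have h0 : (0:ℝ≥0∞) = ∫⁻ _ in unitDisc, (0:ℝ≥0∞) ∂dA := by rw [lintegral_zero]
    rw [h0]
    simp only [bnorm2]
    refine tendsto_lintegral_of_dominated_convergence'
      (fun z => (‖f z‖₊ : ℝ≥0∞) ^ 2 * ENNReal.ofReal (u z)) (fun m => ?_) (fun m => ?_)
      ?_ ?_
    · exact ((((hfc.mul ((hφcont.pow m).continuousOn)).aemeasurable
        unitDisc_measurableSet).nnnorm.coe_nnreal_ennreal).pow_const 2).mul hu_meas.ennreal_ofReal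
    · filter_upwards [ae_restrict_mem unitDisc_measurableSet] with z hz
      have hφ1 : ‖φfun z‖₊ ≤ 1 := by
        rw [← NNReal.coe_le_coe, coe_nnnorm, NNReal.coe_one]
        exact (hφlt z hz).le
      gcongr
      rw [nnnorm_mul]
      refine mul_le_of_le_one_right zero_le ?_
      rw [nnnorm_pow]
      exact pow_le_one₀ zero_le hφ1
    · exact hf.2.ne
    · filter_upwards [ae_restrict_mem unitDisc_measurableSet] with z hz
      have hrw : ∀ m : ℕ, (‖f z * φfun z ^ m‖₊ : ℝ≥0∞) ^ 2 * ENNReal.ofReal (u z)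
          = ((‖f z‖₊ : ℝ≥0∞) ^ 2 * ENNReal.ofReal (u z)) * ((‖φfun z‖₊ : ℝ≥0∞) ^ 2) ^ m := by
        intro m
        rw [nnnorm_mul, nnnorm_pow, ENNReal.coe_mul, ENNReal.coe_pow, mul_pow,
          ← pow_mul, ← pow_mul, Nat.mul_comm m 2]
        ring
      simp only [hrw]
      have hrlt : ((‖φfun z‖₊ : ℝ≥0∞)) ^ 2 < 1 := by
        have h1 : (‖φfun z‖₊ : ℝ≥0∞) < 1 := by
          rw [← ENNReal.coe_one, ENNReal.coe_lt_coe, ← NNReal.coe_lt_coe, coe_nnnorm,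
            NNReal.coe_one]
          exact hφlt z hz
        exact pow_lt_one₀ zero_le h1 (by norm_num)
      have hane : (‖f z‖₊ : ℝ≥0∞) ^ 2 * ENNReal.ofReal (u z) ≠ ⊤ :=
        ENNReal.mul_ne_top (by simp) ENNReal.ofReal_ne_top
      have := ENNReal.Tendsto.const_mul
        (ENNReal.tendsto_pow_atTop_nhds_zero_of_lt_one hrlt) (Or.inr hane)
      simpa using this
  -- choose m with small norm
  have hpos : (0:ℝ≥0∞) < ENNReal.ofReal ((ε/2)^2) := ENNReal.ofReal_pos.2 (by positivity)
  obtain ⟨m, hm⟩ := (htend.eventually_lt_const hpos).exists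
  have hAm : Anorm u (fun z => f z * φfun z ^ m) < ε/2 := by
    rw [Anorm, Real.sqrt_lt' (by positivity : (0:ℝ) < ε/2)]
    exact ENNReal.toReal_lt_of_lt_ofReal hm
  -- the key pointwise estimate at the bad points
  have key : ∀ n : ℕ, ‖φfun (a (ψ n))‖ ^ m < 1/2 := by
    intro n
    have hbmem : a (ψ n) ∈ unitDisc := ha (ψ n)
    have h1 : ε ≤ ‖f (a (ψ n))‖ / Anorm u (fun z => K z (a (ψ n))) := by
      have h := hεle (ψ n)
      rwa [hK_repr (a (ψ n)) hbmem f hf] at h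
    have hNpos : 0 < Anorm u (fun z => K z (a (ψ n))) := by
      rcases (Real.sqrt_nonneg ((bnorm2 u (fun z => K z (a (ψ n)))).toReal)).lt_or_eq
        with h | h
      · exact h
      · exfalso
        rw [Anorm, ← h, div_zero] at h1
        linarith
    have h2 : ε * Anorm u (fun z => K z (a (ψ n))) ≤ ‖f (a (ψ n))‖ :=
      (le_div_iff₀ hNpos).1 h1
    have h3 := cs_bound u hu_nonneg hu_meas (fun z => f z * φfun z ^ m)
      (fun z => K z (a (ψ n))) (hgIsA2 m).1.continuousOn
      (hK_mem (a (ψ n)) hbmem).1.continuousOn (hgIsA2 m).2.ne (hK_mem (a (ψ n)) hbmem).2.ne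
    rw [hK_repr (a (ψ n)) hbmem _ (hgIsA2 m)] at h3
    have h4 : ‖f (a (ψ n)) * φfun (a (ψ n)) ^ m‖ = ‖f (a (ψ n))‖ * ‖φfun (a (ψ n))‖ ^ m := by
      rw [norm_mul, norm_pow]
    have h5 : (ε * ‖φfun (a (ψ n))‖ ^ m) * Anorm u (fun z => K z (a (ψ n)))
        ≤ Anorm u (fun z => f z * φfun z ^ m) * Anorm u (fun z => K z (a (ψ n))) := by
      calc (ε * ‖φfun (a (ψ n))‖ ^ m) * Anorm u (fun z => K z (a (ψ n)))
          = (ε * Anorm u (fun z => K z (a (ψ n)))) * ‖φfun (a (ψ n))‖ ^ m := by ring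
        _ ≤ ‖f (a (ψ n))‖ * ‖φfun (a (ψ n))‖ ^ m :=
            mul_le_mul_of_nonneg_right h2 (by positivity)
        _ = ‖f (a (ψ n)) * φfun (a (ψ n)) ^ m‖ := h4.symm
        _ ≤ Anorm u (fun z => f z * φfun z ^ m) * Anorm u (fun z => K z (a (ψ n))) := h3
    have h6 : ε * ‖φfun (a (ψ n))‖ ^ m ≤ Anorm u (fun z => f z * φfun z ^ m) :=
      le_of_mul_le_mul_right h5 hNpos
    have h7 : ε * ‖φfun (a (ψ n))‖ ^ m < ε * (1/2) := by
      calc ε * ‖φfun (a (ψ n))‖ ^ m ≤ Anorm u (fun z => f z * φfun z ^ m) := h6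
        _ < ε/2 := hAm
        _ = ε * (1/2) := by ring
    exact (mul_lt_mul_iff_right₀ hε).1 h7
  -- but ‖φfun (a (ψ n))‖ ^ m → 1, contradiction
  have htends : Tendsto (fun n => ‖φfun (a (ψ n))‖ ^ m) atTop (𝓝 1) := by
    have hc : Continuous fun z : ℂ => ‖φfun z‖ ^ m := (hφcont.norm).pow m
    have h := (hc.tendsto ζ).comp hψtend
    have hval : ‖φfun ζ‖ ^ m = 1 := by rw [hφζ, norm_one, one_pow]
    rw [hval] at h
    exact h
  obtain ⟨n, hn⟩ := (htends.eventually_const_lt (by norm_num : (1:ℝ)/2 < 1)).exists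
  exact absurd (key n) (not_lt.2 hn.le)
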